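/- Let D be a derivation of a Lie algebra B over a field of characteristic zero. Then for all a, b ∈ B and every natural number m: Σ_{k=0}^{m} (D^k[a, D^{m−k}b] + D^k[D^{m−k}a, b]) = Σ_{i=0}^{m} C(m+2, i+1)·[D^i a, D^{m−i} b]. -/

import Mathlib

open Finset

/-- Pascal-style recombination of binomially weighted sums in an additive monoid. -/
lemma pascal_sum_aux {M : Type*} [AddCommMonoid M] (n : ℕ) (f : ℕ → M) :
    ∑ i ∈ range (n + 2), (n + 1).choose i • f i
      = ∑ j ∈ range (n + 1), n.choose j • f (j + 1)
        + ∑ j ∈ range (n + 1), n.choose j • f j := by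
  rw [Finset.sum_range_succ' (fun i => (n + 1).choose i • f i)]
  have h1 : ∀ i ∈ range (n + 1), (n + 1).choose (i + 1) • f (i + 1)
      = n.choose i • f (i + 1) + n.choose (i + 1) • f (i + 1) := by
    intro i _
    rw [Nat.choose_succ_succ, add_smul]
  rw [Finset.sum_congr rfl h1, Finset.sum_add_distrib]
  have h2 : ∑ j ∈ range (n + 1), n.choose j • f j
      = ∑ i ∈ range n, n.choose (i + 1) • f (i + 1) + n.choose 0 • f 0 := by
    rw [Finset.sum_range_succ' (fun j => n.choose j • f j)]
  have h3 : ∑ i ∈ range (n + 1), n.choose (i + 1) • f (i + 1)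
      = ∑ i ∈ range n, n.choose (i + 1) • f (i + 1) := by
    rw [Finset.sum_range_succ, Nat.choose_succ_self, zero_smul, add_zero]
  rw [h3, h2]
  simp only [Nat.choose_zero_right, one_smul]
  abel

/-- Iterated Leibniz rule for a derivation of a Lie algebra. -/
lemma leibniz_pow_aux {K B : Type*} [Field K] [LieRing B] [LieAlgebra K B]
    (D : Module.End K B) (hD : ∀ x y : B, D ⁅x, y⁆ = ⁅D x, y⁆ + ⁅x, D y⁆)
    (n : ℕ) (x y : B) :
    (D ^ n) ⁅x, y⁆ = ∑ j ∈ range (n + 1), n.choose j • ⁅(D ^ j) x, (D ^ (n - j)) y⁆ := by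
  induction n with
  | zero => simp
  | succ n ih =>
    have hstep : (D ^ (n + 1)) ⁅x, y⁆ = D ((D ^ n) ⁅x, y⁆) := by
      rw [pow_succ', Module.End.mul_apply]
    rw [hstep, ih, map_sum]
    have h1 : ∀ j ∈ range (n + 1),
        D (n.choose j • ⁅(D ^ j) x, (D ^ (n - j)) y⁆)
          = n.choose j • ⁅(D ^ (j + 1)) x, (D ^ (n + 1 - (j + 1))) y⁆
            + n.choose j • ⁅(D ^ j) x, (D ^ (n + 1 - j)) y⁆ := by
      intro j hj
      rw [mem_range] at hj
      have hj' : j ≤ n := Nat.lt_succ_iff.mp hj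
      rw [map_nsmul, hD, smul_add]
      congr 2
      · rw [pow_succ', Module.End.mul_apply]
        have e : n + 1 - (j + 1) = n - j := by omega
        rw [e]
      · have : D ((D ^ (n - j)) y) = (D ^ (n + 1 - j)) y := by
          have : n + 1 - j = (n - j) + 1 := by omega
          rw [this, pow_succ', Module.End.mul_apply]
        rw [this]
    rw [Finset.sum_congr rfl h1, Finset.sum_add_distrib]
    exact (pascal_sum_aux n (fun i => ⁅(D ^ i) x, (D ^ (n + 1 - i)) y⁆)).symm

/-- for a derivation `D` of a Lie algebra `B` over a field of
characteristic zero,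
`Σ_{k=0}^m (D^k⁅a, D^{m−k}b⁆ + D^k⁅D^{m−k}a, b⁆) = Σ_{i=0}^m C(m+2,i+1)·⁅D^i a, D^{m−i} b⁆`. -/
theorem stmt18 (K B : Type*) [Field K] [CharZero K] [LieRing B] [LieAlgebra K B]
    (D : Module.End K B) (hD : ∀ x y : B, D ⁅x, y⁆ = ⁅D x, y⁆ + ⁅x, D y⁆)
    (a b : B) (m : ℕ) :
    ∑ k ∈ Finset.range (m + 1),
        ((D ^ k) ⁅a, (D ^ (m - k)) b⁆ + (D ^ k) ⁅(D ^ (m - k)) a, b⁆) =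
      ∑ i ∈ Finset.range (m + 1),
        (m + 2).choose (i + 1) • ⁅(D ^ i) a, (D ^ (m - i)) b⁆ := by
  -- Step 1: rewrite each summand via the iterated Leibniz rule.
  have key : ∀ k ∈ range (m + 1),
      (D ^ k) ⁅a, (D ^ (m - k)) b⁆ + (D ^ k) ⁅(D ^ (m - k)) a, b⁆
        = (∑ j ∈ range (k + 1), k.choose j • ⁅(D ^ j) a, (D ^ (m - j)) b⁆)
          + ∑ j ∈ range (k + 1), k.choose j • ⁅(D ^ (m - j)) a, (D ^ j) b⁆ := by
    intro k hk
    rw [mem_range] at hk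
    have hk' : k ≤ m := Nat.lt_succ_iff.mp hk
    congr 1
    · rw [leibniz_pow_aux D hD]
      refine Finset.sum_congr rfl fun j hj => ?_
      rw [mem_range] at hj
      have hj' : j ≤ k := Nat.lt_succ_iff.mp hj
      congr 2
      rw [← Module.End.mul_apply, ← pow_add]
      have e : k - j + (m - k) = m - j := by omega
      rw [e]
    · rw [leibniz_pow_aux D hD]
      rw [← Finset.sum_range_reflect]
      refine Finset.sum_congr rfl fun j hj => ?_
      rw [mem_range] at hj
      have hj' : j ≤ k := Nat.lt_succ_iff.mp hj
      have e1 : k + 1 - 1 - j = k - j := by omega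
      rw [e1, Nat.choose_symm hj']
      congr 2
      · rw [← Module.End.mul_apply, ← pow_add]
        have e : k - j + (m - k) = m - j := by omega
        rw [e]
      · have e : k - (k - j) = j := by omega
        rw [e]
  rw [Finset.sum_congr rfl key, Finset.sum_add_distrib]
  -- Step 2: swap the order of summation in each double sum.
  have swap : ∀ F : ℕ → ℕ → B,
      (∑ k ∈ range (m + 1), ∑ j ∈ range (k + 1), F k j)
        = ∑ j ∈ range (m + 1), ∑ k ∈ Icc j m, F k j := by
    intro F
    refine Finset.sum_comm' ?_
    intro k j
    simp only [mem_range, mem_Icc, Nat.lt_succ_iff]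
    omega
  rw [swap, swap]
  -- Step 3: evaluate inner sums with the hockey-stick identity.
  have inner1 : ∀ j ∈ range (m + 1),
      (∑ k ∈ Icc j m, k.choose j • ⁅(D ^ j) a, (D ^ (m - j)) b⁆)
        = (m + 1).choose (j + 1) • ⁅(D ^ j) a, (D ^ (m - j)) b⁆ := by
    intro j _
    rw [← Finset.sum_smul, Nat.sum_Icc_choose]
  have inner2 : ∀ j ∈ range (m + 1),
      (∑ k ∈ Icc j m, k.choose j • ⁅(D ^ (m - j)) a, (D ^ j) b⁆)
        = (m + 1).choose (j + 1) • ⁅(D ^ (m - j)) a, (D ^ j) b⁆ := by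
    intro j _
    rw [← Finset.sum_smul, Nat.sum_Icc_choose]
  rw [Finset.sum_congr rfl inner1, Finset.sum_congr rfl inner2]
  -- Step 4: reflect the second sum and combine with Pascal's rule.
  have refl2 : (∑ j ∈ range (m + 1), (m + 1).choose (j + 1) • ⁅(D ^ (m - j)) a, (D ^ j) b⁆)
      = ∑ i ∈ range (m + 1), (m + 1).choose i • ⁅(D ^ i) a, (D ^ (m - i)) b⁆ := by
    rw [← Finset.sum_range_reflect]
    refine Finset.sum_congr rfl fun i hi => ?_
    rw [mem_range] at hi
    have hi' : i ≤ m := Nat.lt_succ_iff.mp hi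
    have e1 : m + 1 - 1 - i = m - i := by omega
    have e2 : m - (m - i) = i := by omega
    rw [e1, e2]
    congr 1
    have : m - i + 1 = (m + 1) - i := by omega
    rw [this, Nat.choose_symm (by omega)]
  rw [refl2, ← Finset.sum_add_distrib]
  refine Finset.sum_congr rfl fun i _ => ?_
  rw [← add_smul]
  congr 1
  have h4 : (m + 2).choose (i + 1) = (m + 1).choose i + (m + 1).choose (i + 1) :=
    Nat.choose_succ_succ (m + 1) i
  rw [h4, add_comm]
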